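/- In a DAG G with vertex set V, let De(S) denote the strict descendants of set S (vertices reachable by a nonempty directed path from S). If C ⊆ PCh(A) is a set of pure children of A (every parent of every vertex in C lies in A) and no vertex of B is in De(C) ∪ C, then every trek from C to B contains a vertex of A on its C-side path. Hence (A, ∅) t-separates C from B. -/

import Mathlib

/-- A trek from `x` to `y` in the directed graph with edge relation `E`:
an ordered pair of directed paths `(p1, p2)` with a common source,
`p1` ending at `x` and `p2` ending at `y`. -/
structure Trek {V : Type} (E : V → V → Prop) (x y : V) where
  source : V
  p1 : List V
  p2 : List V
  p1_chain : p1.Chain' E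
  p2_chain : p2.Chain' E
  p1_head : p1.head? = some source
  p2_head : p2.head? = some source
  p1_last : p1.getLast? = some x
  p2_last : p2.getLast? = some y

/-- `(CA, CB)` t-separates `A` from `B`: every trek `(p1, p2)` from a vertex of
`A` to a vertex of `B` has `p1` meeting `CA` or `p2` meeting `CB`. -/
def TSeparates {V : Type} (E : V → V → Prop) (CA CB A B : Set V) : Prop :=
  ∀ a ∈ A, ∀ b ∈ B, ∀ t : Trek E a b,
    (∃ v ∈ CA, v ∈ t.p1) ∨ (∃ v ∈ CB, v ∈ t.p2)

/-- The directed graph with edge relation `E` is acyclic. -/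
def IsAcyclicRel {V : Type} (E : V → V → Prop) : Prop :=
  ∀ v, ¬ Relation.TransGen E v v

lemma chain_head_last {V : Type} {E : V → V → Prop} :
    ∀ (l : List V) (z b : V), l.Chain' E → l.head? = some z →
      l.getLast? = some b → z = b ∨ Relation.TransGen E z b := by
  intro l
  induction l with
  | nil => intro z b _ h; simp at h
  | cons a t ih =>
    intro z b hc hh hl
    simp at hh; subst hh
    cases t with
    | nil => left; simpa using hl
    | cons c t' =>
      rw [List.Chain', List.isChain_cons_cons] at hc
      rcases ih c b hc.2 rfl (by simpa using hl) with h | h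
      · right; exact h ▸ Relation.TransGen.single hc.1
      · right; exact Relation.TransGen.head hc.1 h

/-- If every parent of every vertex of `C` lies in `A` (`C` consists of pure
children of `A`) and no vertex of `B` lies in `C` or is a descendant of `C`,
then every trek from `C` to `B` meets `A` on its `C`-side path: `(A, ∅)`
t-separates `C` from `B`. -/
theorem stmt16 {V : Type} (E : V → V → Prop) (hacyc : IsAcyclicRel E)
    (A C B : Set V)
    (hPC : ∀ c ∈ C, ∀ u : V, E u c → u ∈ A)
    (hB : ∀ b ∈ B, b ∉ C ∧ ¬ ∃ c ∈ C, Relation.TransGen E c b) :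
    TSeparates E A ∅ C B := by
  intro c hc b hb t
  left
  have hne : t.p1 ≠ [] := by
    intro h
    have := t.p1_last
    rw [h] at this; simp at this
  have hsplit : t.p1 = t.p1.dropLast ++ [c] := by
    have := t.p1_last
    rw [List.getLast?_eq_getLast hne] at this
    have hc' : t.p1.getLast hne = c := by injection this
    conv_lhs => rw [← List.dropLast_append_getLast hne, hc']
  cases hq : t.p1.dropLast with
  | nil =>
    -- p1 = [c], so source = c, and p2 goes from c to b
    exfalso
    have hp1 : t.p1 = [c] := by rw [hsplit, hq]; simp
    have hs : t.source = c := by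
      have := t.p1_head; rw [hp1] at this; simp at this; exact this.symm
    rcases chain_head_last t.p2 t.source b t.p2_chain t.p2_head t.p2_last with h | h
    · exact (hB b hb).1 (by rw [hs] at h; exact h ▸ hc)
    · exact (hB b hb).2 ⟨c, hc, hs ▸ h⟩
  | cons q0 qt =>
    -- last element u of dropLast is a parent of c
    have hqne : t.p1.dropLast ≠ [] := by rw [hq]; simp
    set u := t.p1.dropLast.getLast hqne with hu
    have hchain := t.p1_chain
    rw [hsplit, List.Chain', List.isChain_append] at hchain
    have hE : E u c := by
      have := hchain.2.2 u (by rw [List.getLast?_eq_getLast hqne]; rfl) c (by simp)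
      exact this
    refine ⟨u, hPC c hc u hE, ?_⟩
    rw [hsplit]
    exact List.mem_append_left _ (List.getLast_mem hqne)
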